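/- Let (X,d) be a metric space and let f : X → ℝ ∪ {+∞} satisfy Assumption A1 for some λ ∈ ℝ. Assume there exists x̄ ∈ D(f) such that m := inf over the closed ball of radius 1 centered at x̄ of f is finite. Then for every y ∈ X, f(y) ≥ (λ/2) d(y,x̄)² + ( m − f(x̄) − λ⁺/2 ) d(y,x̄) + m, where λ⁺ = max(λ,0). -/

import Mathlib

open Filter Topology MeasureTheory
open scoped ENNReal NNReal Classical

section Defs

variable {X : Type*} [MetricSpace X]

/-- The descending slope `|∂f|(x)` of `f : X → ℝ ∪ {+∞}`.  It is `+∞` outside of the effective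
domain, and otherwise `limsup_{y → x} (f x - f y)⁺ / d(y,x)` (which is `0` at isolated points,
since then the limsup is taken along the bottom filter). -/
noncomputable def descSlope (f : X → EReal) (x : X) : ℝ≥0∞ :=
  if f x = ⊤ then ⊤
  else Filter.limsup (fun y => ENNReal.ofReal (((f x - f y) ⊔ 0).toReal / dist y x)) (𝓝[≠] x)

/-- The (upper) metric speed of a curve at a point: where the metric derivative
`lim_{s → t} d(γ s, γ t)/|s - t|` exists, it coincides with this limsup. -/
noncomputable def mSpeed (γ : ℝ → X) (t : ℝ) : ℝ≥0∞ :=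
  Filter.limsup (fun s => ENNReal.ofReal (dist (γ s) (γ t) / |s - t|)) (𝓝[≠] t)

/-- A curve is absolutely continuous on `[a,b]` if its increments are controlled by the
integral of some nonnegative integrable function. -/
def IsACCurveOn (γ : ℝ → X) (a b : ℝ) : Prop :=
  ∃ g : ℝ → ℝ, MeasureTheory.IntegrableOn g (Set.Icc a b) ∧ (∀ t, 0 ≤ g t) ∧
    ∀ s t : ℝ, a ≤ s → s ≤ t → t ≤ b → dist (γ s) (γ t) ≤ ∫ r in s..t, g r

/-- The action integral `∫₀¹ |γ̇|²(t) + |∂f|²(γ(t)) dt`. -/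
noncomputable def actionIntegral (f : X → EReal) (γ : ℝ → X) : ℝ≥0∞ :=
  ∫⁻ t in Set.Ioo (0:ℝ) 1, ((mSpeed γ t) ^ 2 + (descSlope f (γ t)) ^ 2)

/-- The action functional `Θ^f_{x₀,x₁}`. -/
noncomputable def Theta (f : X → EReal) (x₀ x₁ : X) (γ : ℝ → X) : ℝ≥0∞ :=
  if IsACCurveOn γ 0 1 ∧ γ 0 = x₀ ∧ γ 1 = x₁ then actionIntegral f γ else ⊤

/-- `γ : [0,1] → X` is a constant speed geodesic. -/
def IsGeodesic (γ : ℝ → X) : Prop :=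
  ∀ s ∈ Set.Icc (0:ℝ) 1, ∀ t ∈ Set.Icc (0:ℝ) 1,
    dist (γ s) (γ t) = |s - t| * dist (γ 0) (γ 1)

/-- Every pair of points is joined by a constant speed geodesic. -/
def GeodesicSp (X : Type*) [MetricSpace X] : Prop :=
  ∀ x y : X, ∃ γ : ℝ → X, IsGeodesic γ ∧ γ 0 = x ∧ γ 1 = y

/-- `X` is a CAT(0) space. -/
def IsCAT0 (X : Type*) [MetricSpace X] : Prop :=
  GeodesicSp X ∧ ∀ (y : X) (γ : ℝ → X), IsGeodesic γ → ∀ t ∈ Set.Icc (0:ℝ) 1,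
    dist y (γ t) ^ 2 ≤ (1 - t) * dist y (γ 0) ^ 2 + t * dist y (γ 1) ^ 2
      - t * (1 - t) * dist (γ 0) (γ 1) ^ 2

/-- `f` is `λ`-convex along every constant speed geodesic. -/
def LambdaConvex (f : X → EReal) (lam : ℝ) : Prop :=
  ∀ γ : ℝ → X, IsGeodesic γ → ∀ t ∈ Set.Icc (0:ℝ) 1,
    f (γ t) ≤ ((1 - t : ℝ) : EReal) * f (γ 0) + ((t : ℝ) : EReal) * f (γ 1)
      - ((lam / 2 * t * (1 - t) * dist (γ 0) (γ 1) ^ 2 : ℝ) : EReal)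

/-- The resolvent `J_τ^f x`: the set of minimizers of `y ↦ f y + d(y,x)²/(2τ)`. -/
def resolvSet (f : X → EReal) (τ : ℝ) (x : X) : Set X :=
  {u | ∀ y : X, f u + ((dist u x ^ 2 / (2 * τ) : ℝ) : EReal)
      ≤ f y + ((dist y x ^ 2 / (2 * τ) : ℝ) : EReal)}

def IsBoundedSeq (u : ℕ → X) : Prop := ∃ R : ℝ, ∀ n, dist (u n) (u 0) ≤ R

/-- `x` is the asymptotic centre of the (bounded) sequence `u`, i.e. the unique minimizer of
`y ↦ limsup_n d(y, u n)²`. -/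
def IsAsympCentre (u : ℕ → X) (x : X) : Prop :=
  ∀ y : X, y ≠ x →
    Filter.limsup (fun n => dist x (u n) ^ 2) Filter.atTop
      < Filter.limsup (fun n => dist y (u n) ^ 2) Filter.atTop

/-- Weak convergence: `u` is bounded and `x` is the asymptotic centre of every subsequence. -/
def WeakConv (u : ℕ → X) (x : X) : Prop :=
  IsBoundedSeq u ∧ ∀ φ : ℕ → ℕ, StrictMono φ → IsAsympCentre (u ∘ φ) x

/-- Mosco convergence of `F h` to `f`. -/
def MoscoConv (F : ℕ → X → EReal) (f : X → EReal) : Prop :=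
  (∀ (u : ℕ → X) (x : X), WeakConv u x →
      f x ≤ Filter.liminf (fun h => F h (u h)) Filter.atTop) ∧
  (∀ x : X, ∃ u : ℕ → X, Filter.Tendsto u Filter.atTop (𝓝 x) ∧
      Filter.limsup (fun h => F h (u h)) Filter.atTop ≤ f x)

/-- (Metric) Γ-convergence of `F h` to `f`. -/
def GammaConvSeq (F : ℕ → X → EReal) (f : X → EReal) : Prop :=
  (∀ (u : ℕ → X) (x : X), Filter.Tendsto u Filter.atTop (𝓝 x) →
      f x ≤ Filter.liminf (fun h => F h (u h)) Filter.atTop) ∧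
  (∀ x : X, ∃ u : ℕ → X, Filter.Tendsto u Filter.atTop (𝓝 x) ∧
      Filter.limsup (fun h => F h (u h)) Filter.atTop ≤ f x)

/-- Assumption 2.4.5 of Ambrosio-Gigli-Savaré: convexity of the Moreau-Yosida perturbations
along some curve, with base point `x₀`. -/
def AssumptionA1 (f : X → EReal) (lam : ℝ) : Prop :=
  ∀ x₀ x₁ : X, f x₀ ≠ ⊤ → f x₁ ≠ ⊤ →
    ∃ γ : ℝ → X, γ 0 = x₀ ∧ γ 1 = x₁ ∧
      ∀ τ : ℝ, 0 < τ → τ * max (-lam) 0 < 1 →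
        ∀ t ∈ Set.Icc (0:ℝ) 1,
          f (γ t) ≤ (((1 - t) * (f x₀).toReal
            + t * ((f x₁).toReal + dist x₁ x₀ ^ 2 / (2 * τ))
            - (1 / 2) * (lam + 1 / τ) * t * (1 - t) * dist x₀ x₁ ^ 2
            - dist (γ t) x₀ ^ 2 / (2 * τ) : ℝ) : EReal)

/-- Assumption 4.0.1 of Ambrosio-Gigli-Savaré: convexity of the Moreau-Yosida perturbations
along some curve, for every base point `y`. -/
def AssumptionA2 (f : X → EReal) (lam : ℝ) : Prop :=
  ∀ y x₀ x₁ : X, f y ≠ ⊤ → f x₀ ≠ ⊤ → f x₁ ≠ ⊤ →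
    ∃ γ : ℝ → X, γ 0 = x₀ ∧ γ 1 = x₁ ∧
      ∀ τ : ℝ, 0 < τ → τ * max (-lam) 0 < 1 →
        ∀ t ∈ Set.Icc (0:ℝ) 1,
          f (γ t) ≤ (((1 - t) * ((f x₀).toReal + dist x₀ y ^ 2 / (2 * τ))
            + t * ((f x₁).toReal + dist x₁ y ^ 2 / (2 * τ))
            - (1 / 2) * (lam + 1 / τ) * t * (1 - t) * dist x₀ x₁ ^ 2
            - dist (γ t) y ^ 2 / (2 * τ) : ℝ) : EReal)

/-- `G` is an `EVI_λ` gradient flow trajectory for `f` starting at `x`. -/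
def IsEVIFlow (f : X → EReal) (lam : ℝ) (x : X) (G : ℝ → X) : Prop :=
  G 0 = x ∧ Filter.Tendsto G (𝓝[>] (0:ℝ)) (𝓝 x) ∧
  (∀ t : ℝ, 0 < t → f (G t) ≠ ⊤) ∧
  (∀ a b : ℝ, 0 < a → a ≤ b → IsACCurveOn G a b) ∧
  ∀ v : X, f v ≠ ⊤ →
    ∀ᵐ t ∂(MeasureTheory.volume.restrict (Set.Ioi (0:ℝ))),
      ∃ L : ℝ, HasDerivAt (fun s => dist (G s) v ^ 2) L t ∧
        f (G t) + ((L / 2 + lam / 2 * dist (G t) v ^ 2 : ℝ) : EReal) ≤ f v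

/-- Γ-convergence of the functionals `Th h` to `T` on `C([0,1], X)` with respect to uniform
convergence on `[0,1]`. -/
def ThetaGammaConv (Th : ℕ → (ℝ → X) → ℝ≥0∞) (T : (ℝ → X) → ℝ≥0∞) : Prop :=
  (∀ γ : ℝ → X, ContinuousOn γ (Set.Icc 0 1) →
    ∀ Γ : ℕ → ℝ → X, (∀ h, ContinuousOn (Γ h) (Set.Icc 0 1)) →
      TendstoUniformlyOn (fun h t => Γ h t) γ Filter.atTop (Set.Icc 0 1) →
      T γ ≤ Filter.liminf (fun h => Th h (Γ h)) Filter.atTop) ∧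
  (∀ γ : ℝ → X, ContinuousOn γ (Set.Icc 0 1) →
    ∃ Γ : ℕ → ℝ → X, (∀ h, ContinuousOn (Γ h) (Set.Icc 0 1)) ∧
      TendstoUniformlyOn (fun h t => Γ h t) γ Filter.atTop (Set.Icc 0 1) ∧
      Filter.limsup (fun h => Th h (Γ h)) Filter.atTop ≤ T γ)

end Defs

private lemma aux_heq (D F fy lam c τ : ℝ) (hD : D ≠ 0) (hτ : τ ≠ 0) :
    (1 - 1 / D) * F + 1 / D * (fy + D ^ 2 / (2 * τ))
      - 1 / 2 * (lam + 1 / τ) * (1 / D) * (1 - 1 / D) * D ^ 2 - c ^ 2 / (2 * τ)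
    = (1 - 1 / D) * F + 1 / D * fy - lam / 2 * (1 / D) * (1 - 1 / D) * D ^ 2
      + (1 - c ^ 2) / (2 * τ) := by
  field_simp
  ring

private lemma aux_heq3 (D F fy lam N ε : ℝ) (hD : D ≠ 0) :
    ((1 - 1 / D) * F + 1 / D * fy - lam / 2 * (1 / D) * (1 - 1 / D) * D ^ 2
      + (N + 2 * ε / D) / 2) * D
    = (D - 1) * F + fy - lam / 2 * (D ^ 2 - D) + N * D / 2 + ε := by
  field_simp
  ring

set_option maxHeartbeats 1600000

/-- Lower bound for functions satisfying Assumption A1 which are bounded below near a point of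
the effective domain. -/
theorem statement1 {X : Type*} [MetricSpace X] (f : X → EReal) (lam : ℝ)
    (hbot : ∀ x, f x ≠ ⊥) (hA1 : AssumptionA1 f lam)
    (xbar : X) (hxbar : f xbar ≠ ⊤) (m : ℝ)
    (hm : (⨅ y ∈ Metric.closedBall xbar 1, f y) = (m : EReal)) :
    ∀ y : X,
      ((lam / 2 * dist y xbar ^ 2
        + (m - (f xbar).toReal - max lam 0 / 2) * dist y xbar + m : ℝ) : EReal) ≤ f y := by
  intro y
  by_cases hyT : f y = ⊤
  · rw [hyT]; exact le_top
  set D := dist y xbar with hD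
  have hD0 : 0 ≤ D := dist_nonneg
  clear_value D
  have hinf : ∀ z, z ∈ Metric.closedBall xbar 1 → (m : EReal) ≤ f z := by
    intro z hz
    rw [← hm]
    exact iInf₂_le z hz
  have hFcoe : (((f xbar).toReal : ℝ) : EReal) = f xbar := EReal.coe_toReal hxbar (hbot xbar)
  set F := (f xbar).toReal with hF
  clear_value F
  have hmF : m ≤ F := by
    have h := hinf xbar (Metric.mem_closedBall_self zero_le_one)
    rw [← hFcoe] at h
    exact_mod_cast h
  set fy := (f y).toReal with hfy
  clear_value fy
  have hfycoe : ((fy : ℝ) : EReal) = f y := by rw [hfy]; exact EReal.coe_toReal hyT (hbot y)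
  rw [← hfycoe, EReal.coe_le_coe_iff]
  set L := max lam 0 with hL
  clear_value L
  have hL0 : (0:ℝ) ≤ L := hL ▸ le_max_right _ _
  have hlamL : lam ≤ L := hL ▸ le_max_left _ _
  by_cases hD1 : D ≤ 1
  · -- easy case: y is in the ball
    have hmfy : m ≤ fy := by
      have h := hinf y (by rw [Metric.mem_closedBall, ← hD]; exact hD1)
      rw [← hfycoe] at h
      exact_mod_cast h
    nlinarith [mul_nonneg (sub_nonneg.mpr hlamL) (sq_nonneg D),
      mul_nonneg hL0 (by nlinarith : (0:ℝ) ≤ D - D^2),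
      mul_nonneg (by linarith : (0:ℝ) ≤ F - m) hD0]
  · push_neg at hD1
    have hDpos : (0:ℝ) < D := by linarith
    have hDne : D ≠ 0 := ne_of_gt hDpos
    set N := max (-lam) 0 with hN
    have hN0 : (0:ℝ) ≤ N := hN ▸ le_max_right _ _
    have hNL : L - lam = N := by
      rw [hL, hN, ← max_sub_sub_right lam 0 lam]
      simp [max_comm]
    obtain ⟨γ, hγ0, hγ1, hγ⟩ := hA1 xbar y hxbar hyT
    set t := 1 / D with ht
    have htmem : t ∈ Set.Icc (0:ℝ) 1 := by
      constructor
      · rw [ht]; exact le_of_lt (div_pos one_pos hDpos)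
      · rw [ht, div_le_one hDpos]; linarith
    clear_value t
    set τ₀ := 1 / (2 * (N + 1)) with hτ₀
    have hτ₀pos : 0 < τ₀ := by rw [hτ₀]; exact div_pos one_pos (by linarith)
    have hτ₀N : τ₀ * N < 1 := by
      rw [hτ₀, div_mul_eq_mul_div, one_mul, div_lt_one (by linarith)]
      linarith
    clear_value τ₀
    clear_value N
    -- f (γ t) is not ⊤
    have hγtT : f (γ t) ≠ ⊤ := by
      have h := hγ τ₀ hτ₀pos (by rw [← hN]; exact hτ₀N) t htmem
      exact ne_top_of_le_ne_top (EReal.coe_ne_top _) h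
    set r := (f (γ t)).toReal with hr
    clear_value r
    have hrcoe : ((r : ℝ) : EReal) = f (γ t) := by rw [hr]; exact EReal.coe_toReal hγtT (hbot _)
    set c := dist (γ t) xbar with hc
    have hc0 : 0 ≤ c := hc ▸ dist_nonneg
    clear_value c
    set A := (1 - t) * F + t * fy - lam / 2 * t * (1 - t) * D ^ 2 with hA
    clear_value A
    have hkey : ∀ τ : ℝ, 0 < τ → τ * N < 1 → r ≤ A + (1 - c ^ 2) / (2 * τ) := by
      intro τ hτ hτN
      have hτne : τ ≠ 0 := ne_of_gt hτ
      have h := hγ τ hτ (by rw [← hN]; exact hτN) t htmem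
      rw [← hrcoe, EReal.coe_le_coe_iff] at h
      rw [dist_comm xbar y] at h
      rw [← hD, ← hF, ← hfy, ← hc] at h
      have heq : (1 - t) * F + t * (fy + D ^ 2 / (2 * τ))
          - 1 / 2 * (lam + 1 / τ) * t * (1 - t) * D ^ 2 - c ^ 2 / (2 * τ)
          = A + (1 - c ^ 2) / (2 * τ) := by
        rw [hA, ht]
        exact aux_heq D F fy lam c τ hDne hτne
      linarith only [h, heq.le]
    -- c ≤ 1
    have hc1 : c ^ 2 ≤ 1 := by
      by_contra hcon
      push_neg at hcon
      have h0 := hkey τ₀ hτ₀pos hτ₀N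
      have hneg : (1 - c ^ 2) / (2 * τ₀) < 0 :=
        div_neg_of_neg_of_pos (by linarith) (by linarith)
      have hrA : r < A := by linarith
      set K := c ^ 2 - 1 with hK
      have hKpos : 0 < K := by rw [hK]; linarith
      clear_value K
      set τ₁ := min τ₀ (K / (4 * (A - r))) with hτ₁
      have hτ₁pos : 0 < τ₁ :=
        hτ₁ ▸ lt_min hτ₀pos (div_pos hKpos (by linarith))
      have hτ₁le : τ₁ ≤ τ₀ := hτ₁ ▸ min_le_left _ _
      have hτ₁le2 : τ₁ ≤ K / (4 * (A - r)) := hτ₁ ▸ min_le_right _ _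
      clear_value τ₁
      have hτ₁N : τ₁ * N < 1 :=
        lt_of_le_of_lt (mul_le_mul_of_nonneg_right hτ₁le hN0) hτ₀N
      have h1 := hkey τ₁ hτ₁pos hτ₁N
      have hArne : (4:ℝ) * (A - r) ≠ 0 := by
        intro h
        have : A - r = 0 := by linarith
        linarith
      have h2 : 2 * (A - r) ≤ K / (2 * τ₁) := by
        rw [le_div_iff₀ (by linarith : (0:ℝ) < 2 * τ₁)]
        have h3 : 4 * (A - r) * τ₁ ≤ 4 * (A - r) * (K / (4 * (A - r))) :=
          mul_le_mul_of_nonneg_left hτ₁le2 (by linarith)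
        have h4 : 4 * (A - r) * (K / (4 * (A - r))) = K := by
          field_simp
          exact div_self (sub_pos.mpr hrA).ne'
        nlinarith
      have h5 : (1 - c ^ 2) / (2 * τ₁) = -(K / (2 * τ₁)) := by
        rw [hK]; ring
      rw [h5] at h1
      linarith
    have hcball : γ t ∈ Metric.closedBall xbar 1 := by
      rw [Metric.mem_closedBall, ← hc]
      exact (pow_le_one_iff_of_nonneg hc0 two_ne_zero).mp hc1
    have hmr : m ≤ r := by
      have h := hinf (γ t) hcball
      rw [← hrcoe] at h
      exact_mod_cast h
    -- final limiting argument
    refine le_of_forall_pos_le_add fun ε hε => ?_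
    set δ := 2 * ε / D with hδ
    have hδpos : 0 < δ := hδ ▸ div_pos (by linarith) hDpos
    set τ₂ := 1 / (N + δ) with hτ₂
    have hNδ : 0 < N + δ := by linarith
    have hτ₂pos : 0 < τ₂ := hτ₂ ▸ div_pos one_pos hNδ
    have hτ₂N : τ₂ * N < 1 := by
      rw [hτ₂, div_mul_eq_mul_div, one_mul, div_lt_one hNδ]
      linarith
    have h1 := hkey τ₂ hτ₂pos hτ₂N
    have hinvτ : 1 / (2 * τ₂) = (N + δ) / 2 := by
      rw [hτ₂]
      rw [one_div, one_div, mul_inv, inv_inv]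
      ring
    clear_value τ₂
    have h2 : (1 - c ^ 2) / (2 * τ₂) ≤ (N + δ) / 2 := by
      rw [← hinvτ]
      have hden : (0:ℝ) < 2 * τ₂ := by linarith
      apply div_le_div_of_nonneg_right ?_ hden.le |>.trans_eq rfl
      nlinarith [sq_nonneg c]
    have h1' : m ≤ A + (N + δ) / 2 := by
      calc m ≤ r := hmr
        _ ≤ A + (1 - c ^ 2) / (2 * τ₂) := h1
        _ ≤ A + (N + δ) / 2 := by linarith only [h2]
    have h3 := mul_le_mul_of_nonneg_right h1' hD0
    have heq3 : (A + (N + δ) / 2) * D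
        = (D - 1) * F + fy - lam / 2 * (D ^ 2 - D) + N * D / 2 + ε := by
      rw [hA, ht, hδ]
      exact aux_heq3 D F fy lam N ε hDne
    rw [heq3] at h3
    have hND : N * D = (L - lam) * D := by rw [hNL]
    linarith only [h3, hND, hmF, hD0, hD1]
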